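/- arXiv:2012.01453 — 7 statements merged into one kernel-verified Lean document; each statement's English description precedes it below -/
import Mathlib

section
/- Let x = (x_1,…,x_m) be a nonzero real vector with Σ_{k=1}^m x_k = 0, let c_1,…,c_m be distinct q-ary strings of length n, and let d_Z ≥ 1 be an integer. Suppose that for every q-ary string z with 1 ≤ wt(z) ≤ d_Z − 1 one has Σ_{k=1}^m x_k ω^{z·c_k} = 0. Write x_k^+ = max(x_k,0), x_k^- = max(−x_k,0), and X = Σ_k x_k^+ (which is positive). Define the vectors ψ_0 = (1/√X) Σ_k √(x_k^+) e_{c_k} and ψ_1 = (1/√X) Σ_k √(x_k^-) e_{c_k}. Then for every q-ary string z with wt(z) ≤ d_Z − 1, ⟨ψ_0, Z^z ψ_0⟩ = ⟨ψ_1, Z^z ψ_1⟩. -/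
open Finset

/-- The primitive `q`-th root of unity `ω = exp(2πi/q)`. -/
noncomputable def omegaQ (q : ℕ) : ℂ := Complex.exp (2 * Real.pi * Complex.I / q)

/-- The diagonal Pauli operator `Z^z`, determined by `Z^z e_c = ω^{z·c} e_c`. -/
noncomputable def Zpauli (n q : ℕ) [NeZero q] (z : Fin n → ZMod q) :
    EuclideanSpace ℂ (Fin n → ZMod q) →ₗ[ℂ] EuclideanSpace ℂ (Fin n → ZMod q) where
  toFun ψ := WithLp.toLp 2 (fun c => omegaQ q ^ (∑ i, z i * c i).val * ψ c)
  map_add' ψ φ := by ext c; simp [mul_add]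
  map_smul' a ψ := by ext c; simp; ring

lemma key (n q : ℕ) [NeZero q] (m : ℕ) (c : Fin m → Fin n → ZMod q)
    (hc : Function.Injective c) (y : Fin m → ℝ) (hy : ∀ k, 0 ≤ y k) (a : ℝ)
    (z : Fin n → ZMod q) :
    (inner ℂ ((a:ℂ) • ∑ k, ((Real.sqrt (y k) : ℝ) : ℂ) • EuclideanSpace.single (c k) (1:ℂ))
      (Zpauli n q z ((a:ℂ) • ∑ k, ((Real.sqrt (y k) : ℝ) : ℂ) • EuclideanSpace.single (c k) (1:ℂ))) : ℂ)
      = (a:ℂ)^2 * ∑ k, (y k : ℂ) * omegaQ q ^ (∑ i, z i * c k i).val := by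
  set ψ : EuclideanSpace ℂ (Fin n → ZMod q) :=
    (a:ℂ) • ∑ k, ((Real.sqrt (y k) : ℝ) : ℂ) • EuclideanSpace.single (c k) (1:ℂ) with hψ
  have happ : ∀ c' : Fin n → ZMod q,
      ψ c' = (a:ℂ) * ∑ k, ((Real.sqrt (y k) : ℝ) : ℂ) * (if c' = c k then 1 else 0) := by
    intro c'
    rw [hψ, PiLp.smul_apply, WithLp.ofLp_sum, Finset.sum_apply]
    rw [smul_eq_mul (α := ℂ)]
    refine congrArg _ (Finset.sum_congr rfl fun k _ => ?_)
    simp [EuclideanSpace.single_apply]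
  have hval : ∀ k, ψ (c k) = (a:ℂ) * ((Real.sqrt (y k) : ℝ) : ℂ) := by
    intro k
    rw [happ]
    rw [Finset.sum_eq_single k]
    · simp
    · intro l _ hl
      simp [hc.ne (Ne.symm hl)]
    · simp
  have hzero : ∀ c', c' ∉ Finset.image c Finset.univ → ψ c' = 0 := by
    intro c' h
    rw [happ]
    rw [Finset.sum_eq_zero]
    · simp
    · intro l _
      have : c' ≠ c l := by
        intro he; exact h (by simp [he])
      simp [this]
  have hinner : (inner ℂ ψ (Zpauli n q z ψ) : ℂ)
      = ∑ c' : Fin n → ZMod q, (starRingEnd ℂ) (ψ c') * (omegaQ q ^ (∑ i, z i * c' i).val * ψ c') := by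
    rw [PiLp.inner_apply]
    refine Finset.sum_congr rfl fun c' _ => ?_
    rw [RCLike.inner_apply]
    simp only [Zpauli, LinearMap.coe_mk, AddHom.coe_mk]
    ring
  rw [hinner]
  rw [← Finset.sum_subset (Finset.subset_univ (Finset.image c Finset.univ))
    (by intro c' _ h; rw [hzero c' h]; simp)]
  rw [Finset.sum_image (fun k _ l _ h => hc h)]
  rw [Finset.mul_sum]
  refine Finset.sum_congr rfl fun k _ => ?_
  rw [hval]
  simp only [map_mul, Complex.conj_ofReal]
  have hsq : ((Real.sqrt (y k) : ℝ) : ℂ) * ((Real.sqrt (y k) : ℝ) : ℂ) = (y k : ℂ) := by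
    rw [← Complex.ofReal_mul, Real.mul_self_sqrt (hy k)]
  calc (a:ℂ) * ((Real.sqrt (y k) : ℝ) : ℂ) *
        (omegaQ q ^ (∑ i, z i * c k i).val * ((a:ℂ) * ((Real.sqrt (y k) : ℝ) : ℂ)))
      = (a:ℂ)^2 * ((((Real.sqrt (y k) : ℝ) : ℂ) * ((Real.sqrt (y k) : ℝ) : ℂ)) *
          omegaQ q ^ (∑ i, z i * c k i).val) := by ring
    _ = (a:ℂ)^2 * ((y k : ℂ) * omegaQ q ^ (∑ i, z i * c k i).val) := by rw [hsq]

theorem stmt_0 (n q : ℕ) [NeZero q] (hn : 1 ≤ n) (hq : 2 ≤ q)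
    (m : ℕ) (dZ : ℕ) (hdZ : 1 ≤ dZ)
    (x : Fin m → ℝ) (hx : x ≠ 0) (hsum : ∑ k, x k = 0)
    (c : Fin m → (Fin n → ZMod q)) (hc : Function.Injective c)
    (hker : ∀ z : Fin n → ZMod q,
      1 ≤ hammingNorm z → hammingNorm z ≤ dZ - 1 →
      ∑ k, (x k : ℂ) * omegaQ q ^ (∑ i, z i * c k i).val = 0)
    (X : ℝ) (hX : X = ∑ k, max (x k) 0)
    (ψ0 ψ1 : EuclideanSpace ℂ (Fin n → ZMod q))
    (hψ0 : ψ0 = ((1 / Real.sqrt X : ℝ) : ℂ) •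
      ∑ k, ((Real.sqrt (max (x k) 0) : ℝ) : ℂ) • EuclideanSpace.single (c k) (1 : ℂ))
    (hψ1 : ψ1 = ((1 / Real.sqrt X : ℝ) : ℂ) •
      ∑ k, ((Real.sqrt (max (-x k) 0) : ℝ) : ℂ) • EuclideanSpace.single (c k) (1 : ℂ)) :
    ∀ z : Fin n → ZMod q, hammingNorm z ≤ dZ - 1 →
      (inner ℂ ψ0 (Zpauli n q z ψ0) : ℂ) = inner ℂ ψ1 (Zpauli n q z ψ1) := by
  intro z hz
  rw [hψ0, hψ1,
    key n q m c hc (fun k => max (x k) 0) (fun k => le_max_right _ _) (1 / Real.sqrt X) z,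
    key n q m c hc (fun k => max (-x k) 0) (fun k => le_max_right _ _) (1 / Real.sqrt X) z]
  have hsz : ∑ k, (x k : ℂ) * omegaQ q ^ (∑ i, z i * c k i).val = 0 := by
    rcases Nat.eq_zero_or_pos (hammingNorm z) with h0 | h1
    · have hz0 : z = 0 := by rwa [hammingNorm_eq_zero] at h0
      subst hz0
      simp only [Pi.zero_apply, zero_mul, Finset.sum_const_zero, ZMod.val_zero, pow_zero,
        mul_one]
      exact_mod_cast congrArg (fun t : ℝ => (t : ℂ)) hsum
    · exact hker z h1 hz
  congr 1
  rw [← sub_eq_zero, ← Finset.sum_sub_distrib, ← hsz]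
  refine Finset.sum_congr rfl fun k _ => ?_
  rw [← sub_mul]
  congr 1
  rw [← Complex.ofReal_sub, max_zero_sub_max_neg_zero_eq_self]
end

section
/- Let C be a set of q-ary strings of length n whose pairwise Hamming distance is at least d_X (an integer ≥ 1), and let C_0 and C_1 be disjoint subsets of C. Let ψ_0 and ψ_1 be vectors in the Hilbert space that are supported on the basis states {e_c : c ∈ C_0} and {e_c : c ∈ C_1} respectively. Then for all q-ary strings a and b with wt(a) ≤ d_X − 1, one has ⟨ψ_0, (X^a Z^b) ψ_1⟩ = 0. -/
open Finset

/-- The generalized Pauli operator `X^a Z^b`, determined by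
`(X^a Z^b) e_c = ω^{b·c} e_{c−a}`. -/
noncomputable def pauliXZ (n q : ℕ) [NeZero q] (a b : Fin n → ZMod q) :
    EuclideanSpace ℂ (Fin n → ZMod q) →ₗ[ℂ] EuclideanSpace ℂ (Fin n → ZMod q) where
  toFun ψ := WithLp.toLp 2 (fun d => omegaQ q ^ (∑ i, b i * (d i + a i)).val * ψ (d + a))
  map_add' ψ φ := by ext d; simp [mul_add]
  map_smul' r ψ := by ext d; simp; ring

theorem stmt_1 (n q : ℕ) [NeZero q] (hn : 1 ≤ n) (hq : 2 ≤ q)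
    (dX : ℕ) (hdX : 1 ≤ dX)
    (C : Set (Fin n → ZMod q))
    (hdist : ∀ c ∈ C, ∀ c' ∈ C, c ≠ c' → dX ≤ hammingDist c c')
    (C0 C1 : Set (Fin n → ZMod q)) (hC0 : C0 ⊆ C) (hC1 : C1 ⊆ C)
    (hdisj : Disjoint C0 C1)
    (ψ0 ψ1 : EuclideanSpace ℂ (Fin n → ZMod q))
    (hsupp0 : ∀ c : Fin n → ZMod q, c ∉ C0 → ψ0 c = 0)
    (hsupp1 : ∀ c : Fin n → ZMod q, c ∉ C1 → ψ1 c = 0) :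
    ∀ a b : Fin n → ZMod q, hammingNorm a ≤ dX - 1 →
      (inner ℂ ψ0 (pauliXZ n q a b ψ1) : ℂ) = 0 := by
  intro a b ha
  rw [PiLp.inner_apply]
  apply Finset.sum_eq_zero
  intro d _
  by_cases h0 : d ∈ C0
  · by_cases h1 : d + a ∈ C1
    · exfalso
      have hne : d ≠ d + a := by
        intro h
        exact Set.disjoint_left.mp hdisj h0 (h ▸ h1)
      have := hdist d (hC0 h0) (d + a) (hC1 h1) hne
      have hdd : hammingDist d (d + a) = hammingNorm a := by
        rw [hammingDist_eq_hammingNorm]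
        simp [hammingNorm]
      omega
    · simp [pauliXZ, hsupp1 _ h1]
  · simp [hsupp0 _ h0]
end

section
/- (Gilbert–Varshamov bound) For all integers n ≥ 1, q ≥ 2, and 1 ≤ d ≤ n, there exists a set C of q-ary strings of length n whose pairwise Hamming distance is at least d and whose cardinality satisfies |C| ≥ q^n / V_q(d−1), where V_q(r) = Σ_{w=0}^{r} C(n,w)(q−1)^w is the volume of the q-ary Hamming ball of radius r. -/
open Finset

def hammingBallVol (n q r : ℕ) : ℕ := ∑ w ∈ Finset.range (r + 1), n.choose w * (q - 1) ^ w

section aux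
variable (n q : ℕ) [NeZero q]

lemma fiber_bound (c : Fin n → ZMod q) (s : Finset (Fin n)) :
    (univ.filter fun y : Fin n → ZMod q =>
      (univ.filter fun i => c i ≠ y i) = s).card ≤ (q - 1) ^ s.card := by
  classical
  have hcard : (Fintype.piFinset fun i : s => (univ.erase (c i.1))).card
      = (q - 1) ^ s.card := by
    rw [Fintype.card_piFinset]
    simp [Finset.card_erase_of_mem, ZMod.card]
  rw [← hcard]
  apply Finset.card_le_card_of_injOn (fun y (i : s) => y i.1)
  · intro y hy
    simp only [mem_coe, mem_filter, mem_univ, true_and] at hy ⊢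
    rw [Fintype.mem_piFinset]
    intro i
    have : (i : Fin n) ∈ (univ.filter fun j => c j ≠ y j) := by rw [hy]; exact i.2
    simp only [mem_filter, mem_univ, true_and] at this
    exact Finset.mem_erase.2 ⟨fun h => this h.symm, mem_univ _⟩
  · intro y hy y' hy' h
    simp only [mem_coe, mem_filter, mem_univ, true_and] at hy hy'
    funext i
    by_cases hi : i ∈ s
    · exact congrFun h ⟨i, hi⟩
    · have h1 : c i = y i := by
        by_contra hc
        exact hi (hy ▸ (mem_filter.2 ⟨mem_univ _, hc⟩))
      have h2 : c i = y' i := by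
        by_contra hc
        exact hi (hy' ▸ (mem_filter.2 ⟨mem_univ _, hc⟩))
      rw [← h1, ← h2]

lemma sphere_bound (c : Fin n → ZMod q) (w : ℕ) :
    (univ.filter fun y : Fin n → ZMod q => hammingDist c y = w).card
      ≤ n.choose w * (q - 1) ^ w := by
  classical
  have := Finset.card_le_mul_card_image_of_maps_to
    (f := fun y : Fin n → ZMod q => univ.filter fun i => c i ≠ y i)
    (s := univ.filter fun y : Fin n → ZMod q => hammingDist c y = w)
    (t := Finset.powersetCard w (univ : Finset (Fin n)))
    (n := (q - 1) ^ w)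
    (fun y hy => by
      simp only [mem_filter, mem_univ, true_and] at hy
      rw [Finset.mem_powersetCard_univ]
      exact hy)
    (fun s hs => by
      rw [Finset.mem_powersetCard_univ] at hs
      calc ((univ.filter fun y : Fin n → ZMod q => hammingDist c y = w).filter
              fun y => (univ.filter fun i => c i ≠ y i) = s).card
          ≤ (univ.filter fun y : Fin n → ZMod q =>
              (univ.filter fun i => c i ≠ y i) = s).card := by
            apply Finset.card_le_card
            intro y hy
            simp only [mem_filter, mem_univ, true_and] at hy ⊢
            exact hy.2
        _ ≤ (q - 1) ^ s.card := fiber_bound n q c s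
        _ = (q - 1) ^ w := by rw [hs])
  calc (univ.filter fun y : Fin n → ZMod q => hammingDist c y = w).card
      ≤ (q - 1) ^ w * (Finset.powersetCard w (univ : Finset (Fin n))).card := this
    _ = n.choose w * (q - 1) ^ w := by
        rw [Finset.card_powersetCard, Finset.card_univ, Fintype.card_fin, mul_comm]

lemma ball_bound (c : Fin n → ZMod q) (r : ℕ) :
    (univ.filter fun y : Fin n → ZMod q => hammingDist c y ≤ r).card
      ≤ hammingBallVol n q r := by
  classical
  have hsub : (univ.filter fun y : Fin n → ZMod q => hammingDist c y ≤ r)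
      ⊆ (Finset.range (r + 1)).biUnion
          (fun w => univ.filter fun y : Fin n → ZMod q => hammingDist c y = w) := by
    intro y hy
    simp only [mem_filter, mem_univ, true_and] at hy
    exact Finset.mem_biUnion.2 ⟨hammingDist c y, Finset.mem_range.2 (by omega),
      mem_filter.2 ⟨mem_univ _, rfl⟩⟩
  calc (univ.filter fun y : Fin n → ZMod q => hammingDist c y ≤ r).card
      ≤ _ := Finset.card_le_card hsub
    _ ≤ ∑ w ∈ Finset.range (r + 1),
          (univ.filter fun y : Fin n → ZMod q => hammingDist c y = w).card :=
        Finset.card_biUnion_le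
    _ ≤ hammingBallVol n q r := Finset.sum_le_sum fun w _ => sphere_bound n q c w

end aux

/-- Gilbert–Varshamov bound. -/
theorem stmt_3 (n q d : ℕ) [NeZero q] (hn : 1 ≤ n) (hq : 2 ≤ q)
    (hd1 : 1 ≤ d) (hdn : d ≤ n) :
    ∃ C : Finset (Fin n → ZMod q),
      (∀ c ∈ C, ∀ c' ∈ C, c ≠ c' → d ≤ hammingDist c c') ∧
      ((q : ℝ) ^ n / (hammingBallVol n q (d - 1) : ℝ) ≤ (C.card : ℝ)) := by
  classical
  set P : Finset (Fin n → ZMod q) → Prop :=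
    fun C => ∀ c ∈ C, ∀ c' ∈ C, c ≠ c' → d ≤ hammingDist c c' with hP
  have hS : ((univ : Finset (Finset (Fin n → ZMod q))).filter P).Nonempty :=
    ⟨∅, mem_filter.2 ⟨mem_univ _, fun c hc => absurd hc (notMem_empty c)⟩⟩
  obtain ⟨C, hC, hmax⟩ := Finset.exists_max_image _ Finset.card hS
  rw [mem_filter] at hC
  have hCP : P C := hC.2
  refine ⟨C, hCP, ?_⟩
  -- covering property
  have hcover : ∀ x : Fin n → ZMod q, ∃ c ∈ C, hammingDist c x ≤ d - 1 := by
    intro x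
    by_contra hcon
    push_neg at hcon
    have hfar : ∀ c ∈ C, d ≤ hammingDist c x := fun c hc => by
      have := hcon c hc; omega
    have hx : x ∉ C := fun hx => by
      have := hfar x hx
      simp [hammingDist_self] at this
      omega
    have hins : P (insert x C) := by
      intro c hc c' hc' hne
      rcases Finset.mem_insert.1 hc with hcx | hcC
      · rcases Finset.mem_insert.1 hc' with hcx' | hc'C
        · exact absurd (hcx.trans hcx'.symm) hne
        · rw [hcx, hammingDist_comm]; exact hfar c' hc'C
      · rcases Finset.mem_insert.1 hc' with hcx' | hc'C
        · rw [hcx']; exact hfar c hcC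
        · exact hCP c hcC c' hc'C hne
    have := hmax (insert x C) (mem_filter.2 ⟨mem_univ _, hins⟩)
    rw [Finset.card_insert_of_notMem hx] at this
    omega
  -- counting
  have hcount : q ^ n ≤ C.card * hammingBallVol n q (d - 1) := by
    have hsub : (univ : Finset (Fin n → ZMod q))
        ⊆ C.biUnion fun c => univ.filter fun y => hammingDist c y ≤ d - 1 := by
      intro x _
      obtain ⟨c, hc, hd⟩ := hcover x
      exact Finset.mem_biUnion.2 ⟨c, hc, mem_filter.2 ⟨mem_univ _, hd⟩⟩
    calc q ^ n = (univ : Finset (Fin n → ZMod q)).card := by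
          rw [Finset.card_univ]
          simp [ZMod.card]
      _ ≤ _ := Finset.card_le_card hsub
      _ ≤ ∑ c ∈ C, (univ.filter fun y => hammingDist c y ≤ d - 1).card :=
          Finset.card_biUnion_le
      _ ≤ ∑ _c ∈ C, hammingBallVol n q (d - 1) :=
          Finset.sum_le_sum fun c _ => ball_bound n q c (d - 1)
      _ = C.card * hammingBallVol n q (d - 1) := by
          rw [Finset.sum_const, smul_eq_mul]
  have hVpos : 0 < hammingBallVol n q (d - 1) := by
    have h0 : (0 : ℕ) ∈ Finset.range (d - 1 + 1) := Finset.mem_range.2 (by omega)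
    have := Finset.single_le_sum (f := fun w => n.choose w * (q - 1) ^ w)
      (fun i _ => Nat.zero_le _) h0
    simp only [Nat.choose_zero_right, pow_zero, mul_one] at this
    exact lt_of_lt_of_le one_pos (by simpa [hammingBallVol] using this)
  rw [div_le_iff₀ (by exact_mod_cast hVpos)]
  exact_mod_cast hcount
end

section
/- For all integers n ≥ 1, q ≥ 2, and 0 ≤ r ≤ n(q−1)/q, the volume of the q-ary Hamming ball satisfies V_q(r) = Σ_{w=0}^{r} C(n,w)(q−1)^w ≤ q^{n·Ent_q(r/n)}, where Ent_q : [0,1] → ℝ is the q-ary entropy function Ent_q(x) = −x·log_q x − (1−x)·log_q(1−x) + x·log_q(q−1), with the convention Ent_q(0) = 0 and Ent_q(1) = log_q(q−1). -/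
open Finset Real

/-- The `q`-ary entropy function `Ent_q(x)`.  (With Mathlib's junk-value conventions
`logb q 0 = 0`, this automatically satisfies `Ent_q(0) = 0` and
`Ent_q(1) = log_q(q−1)`.) -/
noncomputable def entq (q : ℕ) (x : ℝ) : ℝ :=
  -x * Real.logb q x - (1 - x) * Real.logb q (1 - x) + x * Real.logb q (q - 1)

theorem stmt_4 (n q r : ℕ) (hn : 1 ≤ n) (hq : 2 ≤ q)
    (hr : (r : ℝ) ≤ n * (q - 1) / q) :
    (hammingBallVol n q r : ℝ) ≤ (q : ℝ) ^ ((n : ℝ) * entq q ((r : ℝ) / n)) := by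
  have hn0 : (0:ℝ) < n := by exact_mod_cast hn
  have hq1 : (1:ℝ) < q := by exact_mod_cast hq
  have hq0 : (0:ℝ) < q := by linarith
  rcases Nat.eq_zero_or_pos r with hr0 | hr1
  · subst hr0
    simp [hammingBallVol, entq]
  set x : ℝ := (r:ℝ)/n with hxdef
  have hx0 : 0 < x := div_pos (by exact_mod_cast hr1) hn0
  have hrq : (r:ℝ) * q ≤ n * ((q:ℝ)-1) := by
    rw [le_div_iff₀ hq0] at hr; linarith
  have hxq : x * q ≤ (q:ℝ) - 1 := by
    rw [hxdef, div_mul_eq_mul_div, div_le_iff₀ hn0]; nlinarith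
  have hx1 : x < 1 := by nlinarith
  have hx1' : (0:ℝ) < 1 - x := by linarith
  have hkey : x ≤ ((q:ℝ)-1) * (1-x) := by nlinarith
  have hqm1 : (0:ℝ) < (q:ℝ) - 1 := by linarith
  have hrn : r < n := by
    have : (r:ℝ) < n := by
      rw [hxdef, div_lt_one hn0] at hx1; exact hx1
    exact_mod_cast this
  have hnr : ((n - r : ℕ):ℝ) = (n:ℝ) - r := by
    rw [Nat.cast_sub hrn.le]
  -- Step B: binomial sum bound
  have hB : ∑ w ∈ Finset.range (r+1), (n.choose w : ℝ) * x^w * (1-x)^(n-w) ≤ 1 := by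
    have h1 : ∑ w ∈ Finset.range (r+1), (n.choose w : ℝ) * x^w * (1-x)^(n-w)
        ≤ ∑ w ∈ Finset.range (n+1), (n.choose w : ℝ) * x^w * (1-x)^(n-w) := by
      apply Finset.sum_le_sum_of_subset_of_nonneg
      · exact Finset.range_subset_range.mpr (by omega)
      · intro i _ _; positivity
    have h2 : ∑ w ∈ Finset.range (n+1), (n.choose w : ℝ) * x^w * (1-x)^(n-w) = 1 := by
      calc ∑ w ∈ Finset.range (n+1), (n.choose w : ℝ) * x^w * (1-x)^(n-w)
          = ∑ w ∈ Finset.range (n+1), x^w * (1-x)^(n-w) * (n.choose w : ℝ) := by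
            apply Finset.sum_congr rfl; intros; ring
        _ = (x + (1-x))^n := (add_pow x (1-x) n).symm
        _ = 1 := by norm_num
    linarith
  -- Step A: main sum bound
  have hA : (hammingBallVol n q r : ℝ) * (x^r * (1-x)^(n-r)) ≤ ((q:ℝ)-1)^r := by
    have hcast : (hammingBallVol n q r : ℝ)
        = ∑ w ∈ Finset.range (r+1), (n.choose w : ℝ) * ((q:ℝ)-1)^w := by
      unfold hammingBallVol
      push_cast [Nat.cast_sub (by omega : 1 ≤ q)]
      rfl
    rw [hcast, Finset.sum_mul]
    calc ∑ w ∈ Finset.range (r+1), (n.choose w:ℝ) * ((q:ℝ)-1)^w * (x^r * (1-x)^(n-r))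
        ≤ ∑ w ∈ Finset.range (r+1), ((q:ℝ)-1)^r * ((n.choose w:ℝ) * x^w * (1-x)^(n-w)) := by
          apply Finset.sum_le_sum
          intro w hw
          have hwr : w ≤ r := Nat.lt_succ_iff.mp (Finset.mem_range.mp hw)
          obtain ⟨k, hk⟩ : ∃ k, r = w + k := ⟨r - w, by omega⟩
          have hnw : n - w = (n - r) + k := by omega
          have hpow : x^k ≤ ((q:ℝ)-1)^k * (1-x)^k := by
            calc x^k ≤ (((q:ℝ)-1) * (1-x))^k := pow_le_pow_left₀ hx0.le hkey k
              _ = _ := mul_pow _ _ _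
          have h0 : (0:ℝ) ≤ (n.choose w : ℝ) * ((q:ℝ)-1)^w * x^w * (1-x)^(n-r) := by positivity
          have e1 : x^r = x^w * x^k := by rw [hk, pow_add]
          have e2 : ((q:ℝ)-1)^r = ((q:ℝ)-1)^w * ((q:ℝ)-1)^k := by rw [hk, pow_add]
          have e3 : (1-x)^(n-w) = (1-x)^(n-r) * (1-x)^k := by rw [hnw, pow_add]
          calc (n.choose w:ℝ) * ((q:ℝ)-1)^w * (x^r * (1-x)^(n-r))
              = ((n.choose w:ℝ) * ((q:ℝ)-1)^w * x^w * (1-x)^(n-r)) * x^k := by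
                rw [e1]; ring
            _ ≤ ((n.choose w:ℝ) * ((q:ℝ)-1)^w * x^w * (1-x)^(n-r)) * (((q:ℝ)-1)^k * (1-x)^k) :=
                mul_le_mul_of_nonneg_left hpow h0
            _ = ((q:ℝ)-1)^r * ((n.choose w:ℝ) * x^w * (1-x)^(n-w)) := by
                rw [e2, e3]; ring
      _ = ((q:ℝ)-1)^r * ∑ w ∈ Finset.range (r+1), (n.choose w:ℝ) * x^w * (1-x)^(n-w) :=
          (Finset.mul_sum _ _ _).symm
      _ ≤ ((q:ℝ)-1)^r * 1 := mul_le_mul_of_nonneg_left hB (by positivity)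
      _ = ((q:ℝ)-1)^r := mul_one _
  -- Step C: rewrite the RHS
  have hC : (q:ℝ) ^ ((n:ℝ) * entq q x) = ((q:ℝ)-1)^r / (x^r * (1-x)^(n-r)) := by
    have hnx : (n:ℝ) * x = r := by
      rw [hxdef]; field_simp
    have hexp : (n:ℝ) * entq q x
        = logb q x * (-(r:ℝ)) + logb q (1-x) * (-((n:ℝ) - r)) + logb q ((q:ℝ)-1) * r := by
      unfold entq
      linear_combination (-(logb q x) + logb q (1-x) + logb q ((q:ℝ)-1)) * hnx
    rw [hexp, rpow_add hq0, rpow_add hq0,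
      rpow_mul hq0.le, rpow_mul hq0.le, rpow_mul hq0.le,
      rpow_logb hq0 (ne_of_gt hq1) hx0, rpow_logb hq0 (ne_of_gt hq1) hx1',
      rpow_logb hq0 (ne_of_gt hq1) hqm1,
      rpow_neg hx0.le, rpow_neg hx1'.le, ← hnr,
      rpow_natCast, rpow_natCast, rpow_natCast]
    field_simp
  rw [hC, le_div_iff₀ (mul_pos (pow_pos hx0 r) (pow_pos hx1' (n-r)))]
  exact hA
end

section
/- Every string t of length n over the alphabet Σ = {m ∈ ℤ : |m| ≤ s} is ~-equivalent to exactly one irreducible string; that is, for each such t there exists a unique irreducible string c with t ~ c. -/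
open Finset

/-- The alphabet `Σ = {m ∈ ℤ : |m| ≤ s}`. -/
abbrev SpinLetter (s : ℕ) := {m : ℤ // m ∈ Finset.Icc (-(s : ℤ)) (s : ℤ)}

/-- Strings of length `n` over `Σ`. -/
abbrev SpinStr (s n : ℕ) := Fin n → SpinLetter s

/-- The single-move relation `R`: exchange `0m ↔ m0` for `m ∈ Σ_*`, or
create/annihilate `00 ↔ m(−m)` for `m ∈ {1,…,s}`, at adjacent positions `k, k+1`. -/
def MoveRel (s n : ℕ) (u v : SpinStr s n) : Prop :=
  ∃ k : ℕ, ∃ hk1 : k + 1 < n,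
    (∀ i : Fin n, (i : ℕ) ≠ k → (i : ℕ) ≠ k + 1 → u i = v i) ∧
    ((∃ m : ℤ, m ≠ 0 ∧ |m| ≤ (s : ℤ) ∧
        (((u ⟨k, Nat.lt_of_succ_lt hk1⟩ : ℤ) = 0 ∧ (u ⟨k + 1, hk1⟩ : ℤ) = m ∧
          (v ⟨k, Nat.lt_of_succ_lt hk1⟩ : ℤ) = m ∧ (v ⟨k + 1, hk1⟩ : ℤ) = 0) ∨
         ((u ⟨k, Nat.lt_of_succ_lt hk1⟩ : ℤ) = m ∧ (u ⟨k + 1, hk1⟩ : ℤ) = 0 ∧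
          (v ⟨k, Nat.lt_of_succ_lt hk1⟩ : ℤ) = 0 ∧ (v ⟨k + 1, hk1⟩ : ℤ) = m))) ∨
     (∃ m : ℤ, 1 ≤ m ∧ m ≤ (s : ℤ) ∧
        (((u ⟨k, Nat.lt_of_succ_lt hk1⟩ : ℤ) = 0 ∧ (u ⟨k + 1, hk1⟩ : ℤ) = 0 ∧
          (v ⟨k, Nat.lt_of_succ_lt hk1⟩ : ℤ) = m ∧ (v ⟨k + 1, hk1⟩ : ℤ) = -m) ∨
         ((u ⟨k, Nat.lt_of_succ_lt hk1⟩ : ℤ) = m ∧ (u ⟨k + 1, hk1⟩ : ℤ) = -m ∧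
          (v ⟨k, Nat.lt_of_succ_lt hk1⟩ : ℤ) = 0 ∧ (v ⟨k + 1, hk1⟩ : ℤ) = 0))))

/-- A string is irreducible if it has the form `x_1 … x_k 0 … 0` with all `x_i ∈ Σ_*`
and no index `i < k` with `x_i > 0` and `x_{i+1} = −x_i`. -/
def IrreducibleStr (s n : ℕ) (c : SpinStr s n) : Prop :=
  ∃ k : ℕ, k ≤ n ∧
    (∀ i : Fin n, (i : ℕ) < k → (c i : ℤ) ≠ 0) ∧
    (∀ i : Fin n, k ≤ (i : ℕ) → (c i : ℤ) = 0) ∧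
    (∀ i : Fin n, ∀ h : (i : ℕ) + 1 < n, (i : ℕ) + 1 < k →
      ¬(0 < (c i : ℤ) ∧ (c ⟨(i : ℕ) + 1, h⟩ : ℤ) = -(c i : ℤ)))


namespace SpinAux


def Good (a b : ℤ) : Prop := ¬(0 < a ∧ b = -a)

def red (st : List ℤ) : List ℤ → List ℤ
  | [] => st
  | x :: xs =>
    match st with
    | [] => red [x] xs
    | a :: st' => if 0 < a ∧ x = -a then red st' xs else red (x :: a :: st') xs

lemma red_nil (st : List ℤ) : red st [] = st := rfl

lemma red_cons_nil (x : ℤ) (xs : List ℤ) : red [] (x :: xs) = red [x] xs := rfl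

lemma red_cons_cons (a x : ℤ) (st xs : List ℤ) :
    red (a :: st) (x :: xs) =
      if 0 < a ∧ x = -a then red st xs else red (x :: a :: st) xs := rfl

lemma red_cancel (a : ℤ) (ha : 0 < a) (l2 : List ℤ) :
    ∀ (l1 st : List ℤ), red st (l1 ++ a :: -a :: l2) = red st (l1 ++ l2) := by
  intro l1
  induction l1 with
  | nil =>
    intro st
    cases st with
    | nil =>
      simp only [List.nil_append, red_cons_nil, red_cons_cons]
      rw [if_pos ⟨ha, trivial⟩]
    | cons b st' =>
      simp only [List.nil_append, red_cons_cons]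
      have hcond : ¬(0 < b ∧ a = -b) := by rintro ⟨hb, rfl⟩; omega
      rw [if_neg hcond, if_pos ⟨ha, trivial⟩]
  | cons x l1' ih =>
    intro st
    cases st with
    | nil => simp only [List.cons_append, red_cons_nil]; exact ih [x]
    | cons b st' =>
      simp only [List.cons_append, red_cons_cons]
      split <;> apply ih

lemma red_fixed : ∀ (l st : List ℤ), List.Chain' Good l →
    (∀ b ∈ st.head?, ∀ x ∈ l.head?, Good b x) → red st l = l.reverse ++ st := by
  intro l
  induction l with
  | nil => intro st _ _; simp [red_nil]
  | cons x xs ih =>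
    intro st hc hh
    have hnext : ∀ y ∈ xs.head?, Good x y := by
      intro y hy
      cases xs with
      | nil => simp at hy
      | cons z zs =>
        simp only [List.head?, Option.mem_def, Option.some.injEq] at hy
        subst hy
        exact (List.isChain_cons_cons.mp hc).1
    cases st with
    | nil =>
      rw [red_cons_nil, ih [x] hc.tail ?_]
      · simp
      · intro b hb
        simp only [List.head?, Option.mem_def, Option.some.injEq] at hb
        subst hb
        exact hnext
    | cons b st' =>
      have hgx : Good b x := hh b rfl x rfl
      rw [red_cons_cons, if_neg hgx, ih (x :: b :: st') hc.tail ?_]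
      · simp
      · intro c hc'
        simp only [List.head?, Option.mem_def, Option.some.injEq] at hc'
        subst hc'
        exact hnext


variable {s n : ℕ}

def vals (t : SpinStr s n) : List ℤ := List.ofFn (fun i => (t i : ℤ))

lemma vals_length (t : SpinStr s n) : (vals t).length = n := by simp [vals]

lemma vals_getElem (t : SpinStr s n) (i : ℕ) (h : i < n) :
    (vals t)[i]'(by rw [vals_length]; exact h) = (t ⟨i, h⟩ : ℤ) := by
  simp only [vals]; rw [List.getElem_ofFn]

def core (t : SpinStr s n) : List ℤ := (vals t).filter (fun x => x ≠ 0)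

lemma vals_split (t : SpinStr s n) (k : ℕ) (hk : k + 1 < n) :
    vals t = (vals t).take k ++ (t ⟨k, Nat.lt_of_succ_lt hk⟩ : ℤ) ::
      (t ⟨k + 1, hk⟩ : ℤ) :: (vals t).drop (k + 2) := by
  have h1 : k < (vals t).length := by rw [vals_length]; omega
  conv_lhs => rw [← List.take_append_drop k (vals t)]
  rw [List.drop_eq_getElem_cons h1, List.drop_eq_getElem_cons (by rw [vals_length]; omega : k + 1 < (vals t).length)]
  rw [vals_getElem t k (by omega), vals_getElem t (k+1) (by omega)]

lemma vals_take_eq (u v : SpinStr s n) (k : ℕ)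
    (h : ∀ i : Fin n, (i : ℕ) < k → u i = v i) :
    (vals u).take k = (vals v).take k := by
  apply List.ext_getElem
  · simp [vals_length]
  · intro i h1 h2
    have hik : i < k := by simp [vals_length] at h1; omega
    have hin : i < n := by simp [vals_length] at h1; omega
    rw [List.getElem_take, List.getElem_take, vals_getElem u i hin, vals_getElem v i hin,
      h ⟨i, hin⟩ hik]

lemma vals_drop_eq (u v : SpinStr s n) (k : ℕ)
    (h : ∀ i : Fin n, k ≤ (i : ℕ) → u i = v i) :
    (vals u).drop k = (vals v).drop k := by
  apply List.ext_getElem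
  · simp [vals_length]
  · intro i h1 h2
    have hlt : k + i < n := by simp [vals_length] at h1; omega
    rw [List.getElem_drop, List.getElem_drop, vals_getElem u (k+i) hlt, vals_getElem v (k+i) hlt]
    rw [h ⟨k+i, hlt⟩ (by simp)]

lemma move_core (u v : SpinStr s n) (h : MoveRel s n u v) :
    red [] (core u) = red [] (core v) := by
  obtain ⟨k, hk1, hoff, hcase⟩ := h
  have htake : (vals u).take k = (vals v).take k :=
    vals_take_eq u v k (fun i hi => hoff i (by omega) (by omega))
  have hdrop : (vals u).drop (k+2) = (vals v).drop (k+2) :=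
    vals_drop_eq u v (k+2) (fun i hi => hoff i (by omega) (by omega))
  unfold core
  rw [vals_split u k hk1, vals_split v k hk1, List.filter_append, List.filter_append,
    htake, hdrop]
  rcases hcase with ⟨m, hm0, _, hdir⟩ | ⟨m, hm1, _, hdir⟩
  · rcases hdir with ⟨h1, h2, h3, h4⟩ | ⟨h1, h2, h3, h4⟩ <;>
      rw [h1, h2, h3, h4] <;> simp [List.filter_cons, hm0]
  · have hmpos : (0:ℤ) < m := by omega
    have hm0 : m ≠ 0 := by omega
    have hmn0 : -m ≠ 0 := by omega
    rcases hdir with ⟨h1, h2, h3, h4⟩ | ⟨h1, h2, h3, h4⟩ <;> rw [h1, h2, h3, h4] <;>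
      simp only [List.filter_cons, if_pos, if_neg, decide_eq_true_eq] <;>
      simp [hm0, hmn0]
    · exact (red_cancel m hmpos _ _ []).symm
    · exact red_cancel m hmpos _ _ []

lemma eqv_core (u v : SpinStr s n) (h : Relation.EqvGen (MoveRel s n) u v) :
    red [] (core u) = red [] (core v) := by
  induction h with
  | rel _ _ h => exact move_core _ _ h
  | refl => rfl
  | symm _ _ _ ih => exact ih.symm
  | trans _ _ _ _ _ ih1 ih2 => exact ih1.trans ih2


def mu (t : SpinStr s n) : ℕ := ∑ i : Fin n, if (t i : ℤ) = 0 then 0 else n * n + (i : ℕ)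

lemma sum_split {a b : Fin n} (hab : a ≠ b) (f : Fin n → ℕ) :
    ∑ i, f i = f a + f b + ∑ i ∈ (univ.erase a).erase b, f i := by
  rw [← Finset.add_sum_erase univ f (mem_univ a),
    ← Finset.add_sum_erase (univ.erase a) f (Finset.mem_erase.mpr ⟨hab.symm, mem_univ b⟩)]
  ring

lemma exists_move_A (t : SpinStr s n) (k : ℕ) (hk : k + 1 < n)
    (h0 : (t ⟨k, Nat.lt_of_succ_lt hk⟩ : ℤ) = 0) (hm : (t ⟨k + 1, hk⟩ : ℤ) ≠ 0) :
    ∃ v : SpinStr s n, MoveRel s n t v ∧ mu v < mu t := by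
  set a : Fin n := ⟨k, Nat.lt_of_succ_lt hk⟩ with ha
  set b : Fin n := ⟨k + 1, hk⟩ with hb
  have hab : a ≠ b := by simp [ha, hb, Fin.ext_iff]
  set v : SpinStr s n := fun i => if i = a then t b else if i = b then t a else t i with hv
  have hva : v a = t b := by simp [hv]
  have hvb : v b = t a := by simp [hv, hab.symm]
  have hvoff : ∀ i : Fin n, i ≠ a → i ≠ b → v i = t i := by
    intro i hia hib; simp [hv, hia, hib]
  refine ⟨v, ⟨k, hk, ?_, Or.inl ⟨(t b : ℤ), hm, ?_, Or.inl ⟨h0, rfl, ?_, ?_⟩⟩⟩, ?_⟩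
  · intro i hia hib
    exact (hvoff i (by simp [ha, Fin.ext_iff, hia]) (by simp [hb, Fin.ext_iff, hib])).symm
  · have := Finset.mem_Icc.mp (t b).2
    rw [abs_le]; exact this
  · rw [show (⟨k, Nat.lt_of_succ_lt hk⟩ : Fin n) = a from rfl, hva]
  · rw [show (⟨k + 1, hk⟩ : Fin n) = b from rfl, hvb, h0]
  · unfold mu
    rw [sum_split hab, sum_split hab]
    have hE : ∀ i ∈ (univ.erase a).erase b,
        (if (v i : ℤ) = 0 then 0 else n * n + (i : ℕ)) =
        (if (t i : ℤ) = 0 then 0 else n * n + (i : ℕ)) := by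
      intro i hi
      rw [hvoff i (Finset.mem_erase.mp (Finset.mem_erase.mp hi).2).1
        (Finset.mem_erase.mp hi).1]
    rw [Finset.sum_congr rfl hE]
    have h1 : (v a : ℤ) ≠ 0 := by rw [hva]; exact hm
    have h2 : (v b : ℤ) = 0 := by rw [hvb]; exact h0
    rw [if_neg h1, if_pos h2, if_pos h0, if_neg hm]
    have : (a : ℕ) = k := rfl
    have : (b : ℕ) = k + 1 := rfl
    omega

lemma exists_move_B (t : SpinStr s n) (k : ℕ) (hk : k + 1 < n)
    (hpos : 0 < (t ⟨k, Nat.lt_of_succ_lt hk⟩ : ℤ))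
    (hneg : (t ⟨k + 1, hk⟩ : ℤ) = -(t ⟨k, Nat.lt_of_succ_lt hk⟩ : ℤ)) :
    ∃ v : SpinStr s n, MoveRel s n t v ∧ mu v < mu t := by
  set a : Fin n := ⟨k, Nat.lt_of_succ_lt hk⟩ with ha
  set b : Fin n := ⟨k + 1, hk⟩ with hb
  have hab : a ≠ b := by simp [ha, hb, Fin.ext_iff]
  have hz : (0 : ℤ) ∈ Finset.Icc (-(s : ℤ)) (s : ℤ) := by
    rw [Finset.mem_Icc]; constructor <;> simp
  set v : SpinStr s n := fun i => if i = a ∨ i = b then ⟨0, hz⟩ else t i with hv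
  have hva : (v a : ℤ) = 0 := by simp [hv]
  have hvb : (v b : ℤ) = 0 := by simp [hv]
  have hvoff : ∀ i : Fin n, i ≠ a → i ≠ b → v i = t i := by
    intro i hia hib; simp [hv, hia, hib]
  have hms : (t a : ℤ) ≤ s := (Finset.mem_Icc.mp (t a).2).2
  refine ⟨v, ⟨k, hk, ?_, Or.inr ⟨(t a : ℤ), by omega, hms, Or.inr ⟨rfl, hneg, hva, hvb⟩⟩⟩, ?_⟩
  · intro i hia hib
    exact (hvoff i (by simp [ha, Fin.ext_iff, hia]) (by simp [hb, Fin.ext_iff, hib])).symm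
  · unfold mu
    apply Finset.sum_lt_sum
    · intro i _
      by_cases hia : i = a
      · subst hia; rw [if_pos hva]; exact Nat.zero_le _
      · by_cases hib : i = b
        · subst hib; rw [if_pos hvb]; exact Nat.zero_le _
        · rw [hvoff i hia hib]
    · refine ⟨a, mem_univ a, ?_⟩
      rw [if_pos hva, if_neg (by omega : ¬(t a : ℤ) = 0)]
      have : 0 < n := by omega
      positivity


lemma zero_prop (t : SpinStr s n)
    (hA : ∀ (k : ℕ) (hk : k + 1 < n),
      ¬((t ⟨k, Nat.lt_of_succ_lt hk⟩ : ℤ) = 0 ∧ (t ⟨k + 1, hk⟩ : ℤ) ≠ 0)) :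
    ∀ (j : ℕ) (hj : j < n) (i : ℕ) (hi : i < n), i ≤ j → (t ⟨i, hi⟩ : ℤ) = 0 →
      (t ⟨j, hj⟩ : ℤ) = 0 := by
  intro j
  induction j with
  | zero =>
    intro hj i hi hij h0
    have : i = 0 := by omega
    subst this; exact h0
  | succ j' ih =>
    intro hj i hi hij h0
    by_cases hcase : i = j' + 1
    · subst hcase; exact h0
    · have hij' : i ≤ j' := by omega
      have hz : (t ⟨j', by omega⟩ : ℤ) = 0 := ih (by omega) i hi hij' h0
      have := hA j' hj
      push_neg at this
      exact this hz

lemma exists_irr (hn : 1 ≤ n) (t : SpinStr s n) :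
    ∃ c : SpinStr s n, IrreducibleStr s n c ∧ Relation.EqvGen (MoveRel s n) t c := by
  suffices H : ∀ (N : ℕ) (t : SpinStr s n), mu t < N →
      ∃ c : SpinStr s n, IrreducibleStr s n c ∧ Relation.EqvGen (MoveRel s n) t c from
    H (mu t + 1) t (by omega)
  intro N
  induction N with
  | zero => intro t h; omega
  | succ N ih =>
    intro t hmu
    by_cases hA : ∃ k, ∃ hk : k + 1 < n,
        (t ⟨k, Nat.lt_of_succ_lt hk⟩ : ℤ) = 0 ∧ (t ⟨k + 1, hk⟩ : ℤ) ≠ 0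
    · obtain ⟨k, hk, h0, hm⟩ := hA
      obtain ⟨v, hmv, hlt⟩ := exists_move_A t k hk h0 hm
      obtain ⟨c, hc, he⟩ := ih v (by omega)
      exact ⟨c, hc, Relation.EqvGen.trans _ _ _ (Relation.EqvGen.rel _ _ hmv) he⟩
    · by_cases hB : ∃ k, ∃ hk : k + 1 < n,
          0 < (t ⟨k, Nat.lt_of_succ_lt hk⟩ : ℤ) ∧
          (t ⟨k + 1, hk⟩ : ℤ) = -(t ⟨k, Nat.lt_of_succ_lt hk⟩ : ℤ)
      · obtain ⟨k, hk, hp, hq⟩ := hB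
        obtain ⟨v, hmv, hlt⟩ := exists_move_B t k hk hp hq
        obtain ⟨c, hc, he⟩ := ih v (by omega)
        exact ⟨c, hc, Relation.EqvGen.trans _ _ _ (Relation.EqvGen.rel _ _ hmv) he⟩
      · refine ⟨t, ?_, Relation.EqvGen.refl t⟩
        push_neg at hA
        have hprop := zero_prop t (by
          intro k hk
          rintro ⟨h1, h2⟩
          exact h2 (hA k hk h1))
        classical
        have hQn : ∃ j : ℕ, ∀ i : Fin n, j ≤ (i : ℕ) → (t i : ℤ) = 0 :=
          ⟨n, fun i hi => absurd i.isLt (by omega)⟩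
        set k := Nat.find hQn with hkdef
        have hk_le : k ≤ n := Nat.find_le (fun i hi => absurd i.isLt (by omega))
        have hk_spec : ∀ i : Fin n, k ≤ (i : ℕ) → (t i : ℤ) = 0 := Nat.find_spec hQn
        refine ⟨k, hk_le, ?_, hk_spec, ?_⟩
        · intro i hik hzero
          have hQi : ∀ j : Fin n, (i : ℕ) ≤ (j : ℕ) → (t j : ℤ) = 0 := by
            intro j hj
            have := hprop (j : ℕ) j.isLt (i : ℕ) i.isLt hj (by
              convert hzero using 2)
            convert this using 2
          exact Nat.find_min hQn hik hQi
        · intro i h hik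
          rintro ⟨hp, hq⟩
          refine hB ⟨(i : ℕ), h, ?_, ?_⟩
          · convert hp using 2
          · convert hq using 3 <;> simp

lemma irr_core_take (c : SpinStr s n) (k : ℕ) (hk : k ≤ n)
    (h1 : ∀ i : Fin n, (i : ℕ) < k → (c i : ℤ) ≠ 0)
    (h2 : ∀ i : Fin n, k ≤ (i : ℕ) → (c i : ℤ) = 0) :
    core c = (vals c).take k := by
  unfold core
  conv_lhs => rw [← List.take_append_drop k (vals c), List.filter_append]
  have hkl : ((vals c).take k).length = k := by simp [vals_length]; omega
  have ht : ((vals c).take k).filter (fun x => x ≠ 0) = (vals c).take k := by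
    rw [List.filter_eq_self]
    intro a ha
    obtain ⟨i, hi, hgi⟩ := List.mem_iff_getElem.mp ha
    rw [hkl] at hi
    rw [List.getElem_take, vals_getElem c i (by omega)] at hgi
    rw [← hgi]
    simpa using h1 ⟨i, by omega⟩ hi
  have hd : ((vals c).drop k).filter (fun x => x ≠ 0) = [] := by
    rw [List.filter_eq_nil_iff]
    intro a ha
    obtain ⟨i, hi, hgi⟩ := List.mem_iff_getElem.mp ha
    have hlen : ((vals c).drop k).length = n - k := by simp [vals_length]
    rw [hlen] at hi
    rw [List.getElem_drop, vals_getElem c (k + i) (by omega)] at hgi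
    rw [← hgi]
    simpa using h2 ⟨k + i, by omega⟩ (by simp)
  rw [ht, hd, List.append_nil]

lemma irr_eq (c1 c2 : SpinStr s n) (h1 : IrreducibleStr s n c1) (h2 : IrreducibleStr s n c2)
    (hcore : core c1 = core c2) : c1 = c2 := by
  obtain ⟨k1, hk1, h1a, h1b, _⟩ := h1
  obtain ⟨k2, hk2, h2a, h2b, _⟩ := h2
  rw [irr_core_take c1 k1 hk1 h1a h1b, irr_core_take c2 k2 hk2 h2a h2b] at hcore
  have hlen : k1 = k2 := by
    have := congrArg List.length hcore
    simp [vals_length] at this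
    omega
  subst hlen
  funext i
  apply Subtype.ext
  by_cases hik : (i : ℕ) < k1
  · have e1 : (c1 i : ℤ) = ((vals c1).take k1)[(i : ℕ)]'(by simp [vals_length]; omega) := by
      rw [List.getElem_take, vals_getElem c1 (i : ℕ) i.isLt]
    have e2 : (c2 i : ℤ) = ((vals c2).take k1)[(i : ℕ)]'(by simp [vals_length]; omega) := by
      rw [List.getElem_take, vals_getElem c2 (i : ℕ) i.isLt]
    rw [e1, e2]
    congr 1
  · rw [h1b i (by omega), h2b i (by omega)]

lemma irr_chain (c : SpinStr s n) (h : IrreducibleStr s n c) :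
    List.Chain' Good (core c) := by
  obtain ⟨k, hk, h1, h2, h3⟩ := h
  rw [irr_core_take c k hk h1 h2]
  show List.IsChain Good _
  rw [List.isChain_iff_getElem]
  intro i hi
  have hkl : ((vals c).take k).length = k := by simp [vals_length]; omega
  rw [hkl] at hi
  have hik1 : i + 1 < k := by omega
  have hin : i + 1 < n := by omega
  have e1 : ((vals c).take k).get ⟨i, by omega⟩ = (c ⟨i, by omega⟩ : ℤ) := by
    rw [List.get_eq_getElem, List.getElem_take, vals_getElem c i (by omega)]
  have e2 : ((vals c).take k).get ⟨i + 1, by omega⟩ = (c ⟨i + 1, hin⟩ : ℤ) := by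
    rw [List.get_eq_getElem, List.getElem_take, vals_getElem c (i + 1) hin]
  rw [List.get_eq_getElem] at e1 e2
  rw [e1, e2]
  exact h3 ⟨i, by omega⟩ hin hik1

lemma irr_red (c : SpinStr s n) (h : IrreducibleStr s n c) :
    red [] (core c) = (core c).reverse := by
  rw [red_fixed (core c) [] (irr_chain c h) (by intro b hb; simp at hb)]
  simp

end SpinAux

theorem stmt_7 (s n : ℕ) (hs : 1 ≤ s) (hn : 1 ≤ n) (t : SpinStr s n) :
    ∃! c : SpinStr s n, IrreducibleStr s n c ∧ Relation.EqvGen (MoveRel s n) t c := by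
  obtain ⟨c, hc, he⟩ := SpinAux.exists_irr hn t
  refine ⟨c, ⟨hc, he⟩, ?_⟩
  rintro c' ⟨hc', he'⟩
  apply SpinAux.irr_eq c' c hc' hc
  apply List.reverse_injective
  rw [← SpinAux.irr_red c' hc', ← SpinAux.irr_red c hc,
    ← SpinAux.eqv_core t c' he', ← SpinAux.eqv_core t c he]
end

section
/- For every integer s ≥ 1, the cardinalities |T_n| satisfy the linear recursion |T_{n+2}| = 2s·|T_{n+1}| − s·|T_n| for all n ≥ 0, with initial conditions |T_0| = 1 and |T_1| = 2s. -/
open Finset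

/-- `T_n`: the set of strings `t : Fin n → ℤ` with all letters in
`Σ_* = {m : 1 ≤ |m| ≤ s}` such that no letter `t_j > 0` is immediately followed by
`t_{j+1} = −t_j`. -/
noncomputable def Tset (s n : ℕ) : Finset (Fin n → ℤ) :=
  letI := Classical.decPred
    (fun t : Fin n → ℤ => (∀ i, t i ≠ 0) ∧
      ∀ (i : Fin n) (h : (i : ℕ) + 1 < n), ¬(0 < t i ∧ t ⟨(i : ℕ) + 1, h⟩ = -t i))
  (Fintype.piFinset fun _ : Fin n => Finset.Icc (-(s : ℤ)) (s : ℤ)).filter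
    (fun t => (∀ i, t i ≠ 0) ∧
      ∀ (i : Fin n) (h : (i : ℕ) + 1 < n), ¬(0 < t i ∧ t ⟨(i : ℕ) + 1, h⟩ = -t i))

lemma stmt8_mem_Tset {s m : ℕ} {t : Fin m → ℤ} : t ∈ Tset s m ↔
    (∀ i, -(s:ℤ) ≤ t i ∧ t i ≤ s ∧ t i ≠ 0) ∧
    ∀ (i : Fin m) (h : (i : ℕ) + 1 < m), ¬(0 < t i ∧ t ⟨(i : ℕ) + 1, h⟩ = -t i) := by
  simp only [Tset, mem_filter, Fintype.mem_piFinset, mem_Icc]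
  constructor
  · rintro ⟨h1, h2, h3⟩
    exact ⟨fun i => ⟨(h1 i).1, (h1 i).2, h2 i⟩, h3⟩
  · rintro ⟨h1, h2⟩
    exact ⟨fun i => ⟨(h1 i).1, (h1 i).2.1⟩, fun i => (h1 i).2.2, h2⟩

lemma stmt8_cons_mk_succ {m} (a : ℤ) (u : Fin m → ℤ) (j : ℕ) (h : j + 1 < m + 1) :
    (Fin.cons a u : Fin (m+1) → ℤ) ⟨j + 1, h⟩ = u ⟨j, by omega⟩ := rfl

lemma stmt8_cons_mem_Tset {s m : ℕ} {a : ℤ} {u : Fin m → ℤ} :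
    Fin.cons a u ∈ Tset s (m + 1) ↔
      ((-(s:ℤ) ≤ a ∧ a ≤ s ∧ a ≠ 0) ∧ u ∈ Tset s m ∧
        ∀ (h : 0 < m), ¬(0 < a ∧ u ⟨0, h⟩ = -a)) := by
  rw [stmt8_mem_Tset, stmt8_mem_Tset]
  constructor
  · rintro ⟨h1, h2⟩
    refine ⟨by simpa using h1 0, ⟨fun i => by simpa using h1 i.succ, ?_⟩, ?_⟩
    · intro i h
      exact fun hc => h2 ⟨(i:ℕ)+1, Nat.lt_succ_of_lt h⟩ (Nat.succ_lt_succ h) hc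
    · intro h
      exact fun hc => h2 ⟨0, Nat.succ_pos m⟩ (Nat.succ_lt_succ h) hc
  · rintro ⟨ha, ⟨hu1, hu2⟩, h0⟩
    refine ⟨fun i => ?_, fun i => ?_⟩
    · refine Fin.cases ?_ ?_ i
      · simpa using ha
      · intro j; simpa using hu1 j
    · refine Fin.cases ?_ ?_ i
      · intro h hc
        have hm : 0 < m := by simp at h; omega
        exact h0 hm hc
      · intro j h hc
        have h' : (j : ℕ) + 1 < m := by simp at h; omega
        exact hu2 j h' hc

/-- The alphabet. -/
noncomputable def stmt8_Sig (s : ℕ) : Finset ℤ := (Finset.Icc (-(s:ℤ)) s).erase 0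

lemma stmt8_mem_Sig {s : ℕ} {a : ℤ} :
    a ∈ stmt8_Sig s ↔ (-(s:ℤ) ≤ a ∧ a ≤ s ∧ a ≠ 0) := by
  simp only [stmt8_Sig, mem_erase, mem_Icc]; tauto

lemma stmt8_card_Sig {s : ℕ} (hs : 1 ≤ s) : (stmt8_Sig s).card = 2 * s := by
  rw [stmt8_Sig, card_erase_of_mem (by simp [mem_Icc]), Int.card_Icc]
  omega

open Classical in
lemma stmt8_card_step (s n : ℕ) :
    (Tset s (n + 1)).card =
      (((stmt8_Sig s) ×ˢ Tset s n).filter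
        (fun p => ∀ h : 0 < n, ¬(0 < p.1 ∧ p.2 ⟨0, h⟩ = -p.1))).card := by
  refine Finset.card_bij' (fun t _ => (t 0, Fin.tail t)) (fun p _ => Fin.cons p.1 p.2)
    ?_ ?_ ?_ ?_
  · intro t ht
    rw [← Fin.cons_self_tail t] at ht
    rw [stmt8_cons_mem_Tset] at ht
    simp only [mem_filter, mem_product, stmt8_mem_Sig]
    exact ⟨⟨ht.1, ht.2.1⟩, ht.2.2⟩
  · intro p hp
    simp only [mem_filter, mem_product, stmt8_mem_Sig] at hp
    rw [stmt8_cons_mem_Tset]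
    exact ⟨hp.1.1, hp.1.2, hp.2⟩
  · intro t _; exact Fin.cons_self_tail t
  · intro p _; simp

open Classical in
lemma stmt8_card_bad (s n : ℕ) :
    (((stmt8_Sig s) ×ˢ Tset s (n+1)).filter
        (fun p => ¬ ∀ h : 0 < n + 1, ¬(0 < p.1 ∧ p.2 ⟨0, h⟩ = -p.1))).card
      = s * (Tset s n).card := by
  have hcard : ((Finset.Icc (1:ℤ) s) ×ˢ Tset s n).card = s * (Tset s n).card := by
    rw [card_product, Int.card_Icc]
    have : ((s:ℤ) + 1 - 1).toNat = s := by omega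
    rw [this]
  rw [← hcard]
  refine Finset.card_bij' (fun p _ => (p.1, Fin.tail p.2)) (fun p _ => (p.1, Fin.cons (-p.1) p.2))
    ?_ ?_ ?_ ?_
  · intro p hp
    simp only [mem_filter, mem_product, stmt8_mem_Sig, not_forall, not_not] at hp
    obtain ⟨⟨ha, hu⟩, _, hpos, heq⟩ := hp
    rw [← Fin.cons_self_tail p.2, stmt8_cons_mem_Tset] at hu
    simp only [mem_product, mem_Icc]
    exact ⟨⟨by omega, by omega⟩, hu.2.1⟩
  · intro p hp
    simp only [mem_product, mem_Icc] at hp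
    obtain ⟨⟨h1, h2⟩, hw⟩ := hp
    simp only [mem_filter, mem_product, stmt8_mem_Sig, not_forall, not_not]
    refine ⟨⟨⟨by omega, by omega, by omega⟩, ?_⟩, Nat.succ_pos n, by omega, ?_⟩
    · rw [stmt8_cons_mem_Tset]
      exact ⟨⟨by omega, by omega, by omega⟩, hw, fun h hc => by omega⟩
    · show (Fin.cons (-p.1) p.2 : Fin (n+1) → ℤ) ⟨0, _⟩ = -p.1
      rfl
  · intro p hp
    simp only [mem_filter, mem_product, stmt8_mem_Sig, not_forall, not_not] at hp
    obtain ⟨_, _, hpos, heq⟩ := hp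
    have h0 : p.2 0 = -p.1 := heq
    have : Fin.cons (-p.1) (Fin.tail p.2) = p.2 := by
      rw [← h0]; exact Fin.cons_self_tail p.2
    simp [this]
  · intro p _
    simp

lemma stmt8_card_T0 (s : ℕ) : (Tset s 0).card = 1 := by
  have : Tset s 0 = {finZeroElim} := by
    ext t
    simp only [stmt8_mem_Tset, mem_singleton]
    constructor
    · intro _; funext i; exact i.elim0
    · intro _; exact ⟨fun i => i.elim0, fun i => i.elim0⟩
  rw [this, card_singleton]

theorem stmt_8 (s : ℕ) (hs : 1 ≤ s) :
    (Tset s 0).card = 1 ∧ (Tset s 1).card = 2 * s ∧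
    ∀ n : ℕ, ((Tset s (n + 2)).card : ℤ)
      = 2 * s * ((Tset s (n + 1)).card : ℤ) - s * ((Tset s n).card : ℤ) := by
  classical
  have key : ∀ n : ℕ,
      (Tset s (n+1)).card + (((stmt8_Sig s) ×ˢ Tset s n).filter
        (fun p => ¬ ∀ h : 0 < n, ¬(0 < p.1 ∧ p.2 ⟨0, h⟩ = -p.1))).card
      = 2 * s * (Tset s n).card := by
    intro n
    rw [stmt8_card_step s n,
      Finset.card_filter_add_card_filter_not
        (p := fun p : ℤ × (Fin n → ℤ) => ∀ h : 0 < n, ¬(0 < p.1 ∧ p.2 ⟨0, h⟩ = -p.1)),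
      card_product, stmt8_card_Sig hs, mul_assoc]
  refine ⟨stmt8_card_T0 s, ?_, ?_⟩
  · have h1 := key 0
    have h2 : (((stmt8_Sig s) ×ˢ Tset s 0).filter
        (fun p => ¬ ∀ h : (0:ℕ) < 0, ¬(0 < p.1 ∧ p.2 ⟨0, h⟩ = -p.1))).card = 0 := by
      rw [Finset.card_eq_zero, Finset.filter_eq_empty_iff]
      intro p _
      simp only [not_not, not_forall]
      rintro ⟨h, _⟩
      exact absurd h (by omega)
    rw [h2, stmt8_card_T0 s] at h1
    simp only [Nat.add_zero, Nat.mul_one] at h1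
    exact h1
  · intro n
    have h1 := key (n+1)
    rw [stmt8_card_bad s n] at h1
    linarith
end

section
/- Let C ⊆ (ZMod 2)^7 be the [7,4,3] Hamming code, i.e., the F₂-linear span of the four generators 1000110, 0100101, 0010011, 0001111, and let C_0 and C_1 be its subsets of codewords of even and odd Hamming weight respectively (each has 8 elements). Define ψ_0 = (1/√8)·Σ_{c∈C_0} e_c and ψ_1 = (1/√8)·Σ_{c∈C_1} e_c in the Hilbert space of 7 qubits. Then for all binary strings a, b of length 7 with |{i : a_i ≠ 0 or b_i ≠ 0}| ≤ 2 (i.e., for every 7-qubit Pauli operator of weight at most 2), one has ⟨ψ_0, (X^a Z^b) ψ_1⟩ = 0 and ⟨ψ_0, (X^a Z^b) ψ_0⟩ = ⟨ψ_1, (X^a Z^b) ψ_1⟩; that is, ψ_0, ψ_1 are the logical codewords of a quantum code of distance 3 (the Steane code). -/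
set_option maxRecDepth 1000000
set_option maxHeartbeats 8000000

open Finset

/-- The `[7,4,3]` Hamming code: the `F₂`-linear span of
`1000110, 0100101, 0010011, 0001111`. -/
def hammingCode : Submodule (ZMod 2) (Fin 7 → ZMod 2) :=
  Submodule.span (ZMod 2)
    {![1,0,0,0,1,1,0], ![0,1,0,0,1,0,1], ![0,0,1,0,0,1,1], ![0,0,0,1,1,1,1]}

open Classical in
/-- The even-weight Hamming codewords. -/
noncomputable def steaneC0 : Finset (Fin 7 → ZMod 2) :=
  Finset.univ.filter (fun c => c ∈ hammingCode ∧ Even (hammingNorm c))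

open Classical in
/-- The odd-weight Hamming codewords. -/
noncomputable def steaneC1 : Finset (Fin 7 → ZMod 2) :=
  Finset.univ.filter (fun c => c ∈ hammingCode ∧ Odd (hammingNorm c))

/-! ### Auxiliary material -/

def checks (c : Fin 7 → ZMod 2) : Prop :=
  c 4 = c 0 + c 1 + c 3 ∧ c 5 = c 0 + c 2 + c 3 ∧ c 6 = c 1 + c 2 + c 3

instance : DecidablePred checks := fun c => by unfold checks; infer_instance

lemma mem_hammingCode {c : Fin 7 → ZMod 2} : c ∈ hammingCode ↔ checks c := by
  constructor
  · intro hc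
    induction hc using Submodule.span_induction with
    | mem x hx =>
      simp only [Set.mem_insert_iff, Set.mem_singleton_iff] at hx
      rcases hx with rfl | rfl | rfl | rfl <;> decide
    | zero => decide
    | add x y _ _ hx hy =>
      obtain ⟨h1, h2, h3⟩ := hx; obtain ⟨g1, g2, g3⟩ := hy
      refine ⟨?_, ?_, ?_⟩ <;> simp [Pi.add_apply, h1, h2, h3, g1, g2, g3] <;> ring
    | smul r x _ hx =>
      obtain ⟨h1, h2, h3⟩ := hx
      refine ⟨?_, ?_, ?_⟩ <;> simp [Pi.smul_apply, smul_eq_mul, h1, h2, h3] <;> ring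
  · intro hc
    obtain ⟨h4, h5, h6⟩ := hc
    have hrep : c = c 0 • ![1,0,0,0,1,1,0] + c 1 • ![0,1,0,0,1,0,1]
        + c 2 • ![0,0,1,0,0,1,1] + c 3 • ![0,0,0,1,1,1,1] := by
      have H : ∀ d : Fin 7 → ZMod 2, checks d →
          d = d 0 • ![1,0,0,0,1,1,0] + d 1 • ![0,1,0,0,1,0,1]
            + d 2 • ![0,0,1,0,0,1,1] + d 3 • ![0,0,0,1,1,1,1] := by decide
      exact H c ⟨h4, h5, h6⟩
    rw [hrep]
    have m : ∀ v ∈ ({![1,0,0,0,1,1,0], ![0,1,0,0,1,0,1], ![0,0,1,0,0,1,1],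
        ![0,0,0,1,1,1,1]} : Set (Fin 7 → ZMod 2)), v ∈ hammingCode :=
      fun v hv => Submodule.subset_span hv
    refine add_mem (add_mem (add_mem ?_ ?_) ?_) ?_ <;>
      exact Submodule.smul_mem _ _ (m _ (by simp))

def C0L : List (Fin 7 → ZMod 2) :=
  [![0,0,0,0,0,0,0], ![0,0,0,1,1,1,1], ![0,1,1,0,1,1,0], ![0,1,1,1,0,0,1],
   ![1,0,1,0,1,0,1], ![1,0,1,1,0,1,0], ![1,1,0,0,0,1,1], ![1,1,0,1,1,0,0]]

def C1L : List (Fin 7 → ZMod 2) :=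
  [![0,0,1,0,0,1,1], ![0,0,1,1,1,0,0], ![0,1,0,0,1,0,1], ![0,1,0,1,0,1,0],
   ![1,0,0,0,1,1,0], ![1,0,0,1,0,0,1], ![1,1,1,0,0,0,0], ![1,1,1,1,1,1,1]]

lemma steaneC0_eq : steaneC0 = C0L.toFinset := by
  have H : ∀ c : Fin 7 → ZMod 2, (checks c ∧ Even (hammingNorm c)) ↔ c ∈ C0L := by decide
  ext c
  simp only [steaneC0, Finset.mem_filter, Finset.mem_univ, true_and, mem_hammingCode,
    List.mem_toFinset]
  exact H c

lemma steaneC1_eq : steaneC1 = C1L.toFinset := by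
  have H : ∀ c : Fin 7 → ZMod 2, (checks c ∧ Odd (hammingNorm c)) ↔ c ∈ C1L := by decide
  ext c
  simp only [steaneC1, Finset.mem_filter, Finset.mem_univ, true_and, mem_hammingCode,
    List.mem_toFinset]
  exact H c

lemma C0L_nodup : C0L.Nodup := by decide
lemma C1L_nodup : C1L.Nodup := by decide

def sgn (b d : Fin 7 → ZMod 2) : ℤ := (-1 : ℤ) ^ (∑ i, b i * d i).val

def TL (L L' : List (Fin 7 → ZMod 2)) (a b : Fin 7 → ZMod 2) : ℤ :=
  (L.map (fun d => if (d + a) ∈ L' then sgn b (d + a) else 0)).sum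

def wOK (a b : Fin 7 → ZMod 2) : Prop :=
  (Finset.univ.filter fun i => a i ≠ 0 ∨ b i ≠ 0).card ≤ 2

instance : ∀ a b, Decidable (wOK a b) := fun a b => by unfold wOK; infer_instance

lemma key_s17 : ∀ a b : Fin 7 → ZMod 2, wOK a b →
    TL C0L C1L a b = 0 ∧ TL C0L C0L a b = TL C1L C1L a b := by decide

lemma omegaQ_two : omegaQ 2 = -1 := by
  have : (2 * (Real.pi : ℂ) * Complex.I / (2 : ℕ)) = Real.pi * Complex.I := by
    push_cast; ring
  rw [omegaQ, this, Complex.exp_pi_mul_I]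

lemma apply_sum_single (S : Finset (Fin 7 → ZMod 2)) (d : Fin 7 → ZMod 2) :
    (∑ c ∈ S, EuclideanSpace.single c (1:ℂ)) d = if d ∈ S then 1 else 0 := by
  rw [WithLp.ofLp_sum, Finset.sum_apply]
  simp [EuclideanSpace.single_apply]

lemma inner_formula (S S' : Finset (Fin 7 → ZMod 2)) (a b : Fin 7 → ZMod 2) :
    (inner ℂ (((1 / Real.sqrt 8 : ℝ) : ℂ) • ∑ c ∈ S, EuclideanSpace.single c (1 : ℂ))
      (pauliXZ 7 2 a b (((1 / Real.sqrt 8 : ℝ) : ℂ) •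
        ∑ c ∈ S', EuclideanSpace.single c (1 : ℂ))) : ℂ)
    = (1/8 : ℂ) * ∑ d ∈ S,
        (if d + a ∈ S' then ((-1:ℂ) ^ ((∑ i, b i * (d i + a i)).val)) else 0) := by
  set s : ℂ := ((1 / Real.sqrt 8 : ℝ) : ℂ) with hs
  rw [PiLp.inner_apply]
  simp only [RCLike.inner_apply]
  simp only [mul_comm (((pauliXZ 7 2 a b) _).ofLp _)]
  have hP : ∀ (ψ : EuclideanSpace ℂ (Fin 7 → ZMod 2)) d,
      (pauliXZ 7 2 a b ψ) d = omegaQ 2 ^ (∑ i, b i * (d i + a i)).val * ψ (d + a) :=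
    fun _ _ => rfl
  have hss : s * s = 1/8 := by
    have h8 : (1/Real.sqrt 8) * (1/Real.sqrt 8) = 1/8 := by
      rw [div_mul_div_comm, one_mul, Real.mul_self_sqrt (by norm_num : (0:ℝ) ≤ 8)]
    rw [hs, ← Complex.ofReal_mul, h8]; push_cast; ring
  calc ∑ d : Fin 7 → ZMod 2, (starRingEnd ℂ) ((s • (∑ c ∈ S, EuclideanSpace.single c (1:ℂ))) d) *
        (pauliXZ 7 2 a b (s • ∑ c ∈ S', EuclideanSpace.single c (1:ℂ))) d
      = ∑ d : Fin 7 → ZMod 2, (s * s) * (if d ∈ S then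
          (if d + a ∈ S' then ((-1:ℂ) ^ ((∑ i, b i * (d i + a i)).val)) else 0) else 0) := by
        refine Finset.sum_congr rfl fun d _ => ?_
        rw [hP]
        simp only [PiLp.smul_apply, smul_eq_mul, apply_sum_single, omegaQ_two]
        rw [map_mul, Complex.conj_ofReal]
        split_ifs <;> simp only [map_one, map_zero, mul_one, mul_zero, zero_mul, one_mul] <;> ring
    _ = (1/8 : ℂ) * ∑ d ∈ S,
          (if d + a ∈ S' then ((-1:ℂ) ^ ((∑ i, b i * (d i + a i)).val)) else 0) := by
        rw [← Finset.mul_sum, hss]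
        congr 1
        rw [Finset.sum_ite_mem, Finset.univ_inter]

lemma sum_eq_cast (L L' : List (Fin 7 → ZMod 2)) (hL : L.Nodup) (a b : Fin 7 → ZMod 2) :
    ∑ d ∈ L.toFinset,
        (if d + a ∈ L'.toFinset then ((-1:ℂ) ^ ((∑ i, b i * (d i + a i)).val)) else 0)
      = ((TL L L' a b : ℤ) : ℂ) := by
  rw [List.sum_toFinset _ hL, TL, Int.cast_list_sum, List.map_map]
  congr 1
  refine List.map_congr_left fun d _ => ?_
  by_cases h : d + a ∈ L' <;>
    simp [h, sgn, Function.comp]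

theorem stmt_17
    (ψ0 ψ1 : EuclideanSpace ℂ (Fin 7 → ZMod 2))
    (hψ0 : ψ0 = ((1 / Real.sqrt 8 : ℝ) : ℂ) •
      ∑ c ∈ steaneC0, EuclideanSpace.single c (1 : ℂ))
    (hψ1 : ψ1 = ((1 / Real.sqrt 8 : ℝ) : ℂ) •
      ∑ c ∈ steaneC1, EuclideanSpace.single c (1 : ℂ)) :
    steaneC0.card = 8 ∧ steaneC1.card = 8 ∧
    ∀ a b : Fin 7 → ZMod 2,
      ({i : Fin 7 | a i ≠ 0 ∨ b i ≠ 0} : Set (Fin 7)).ncard ≤ 2 →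
        (inner ℂ ψ0 (pauliXZ 7 2 a b ψ1) : ℂ) = 0 ∧
        (inner ℂ ψ0 (pauliXZ 7 2 a b ψ0) : ℂ) = inner ℂ ψ1 (pauliXZ 7 2 a b ψ1) := by
  refine ⟨by rw [steaneC0_eq]; decide, by rw [steaneC1_eq]; decide, ?_⟩
  intro a b hw
  have hw' : wOK a b := by
    have : ({i : Fin 7 | a i ≠ 0 ∨ b i ≠ 0} : Set (Fin 7)).ncard
        = (Finset.univ.filter fun i => a i ≠ 0 ∨ b i ≠ 0).card := by
      rw [Set.ncard_eq_toFinset_card', Set.toFinset_setOf]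
    rw [wOK]; rw [this] at hw; exact hw
  obtain ⟨h1, h2⟩ := key_s17 a b hw'
  subst hψ0 hψ1
  rw [steaneC0_eq, steaneC1_eq]
  constructor
  · rw [inner_formula, sum_eq_cast _ _ C0L_nodup, h1]
    norm_num
  · rw [inner_formula, inner_formula, sum_eq_cast _ _ C0L_nodup, sum_eq_cast _ _ C1L_nodup, h2]
end
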